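/- Let H be a separable infinite-dimensional complex Hilbert space and let {f_n}_{n=0}^∞ be a sequence in H. If there exist an infinite-dimensional linear subspace D ⊆ H and a constant A > 0 such that A‖f‖² ≤ ∑_{n=0}^∞ |⟨f, f_n⟩|² < ∞ for every f ∈ D, then {f_n} is a CFC sequence; that is, there exists a bounded linear operator B on H such that {B f_n} is a Parseval frame for H. -/

import Mathlib

open scoped ComplexInnerProductSpace ENNReal

private lemma aux_summable {E : Type*} [NormedAddCommGroup E] [CompleteSpace E]
    {x : ℕ → E} {d : ℕ → ℝ} {M : ℝ} (hM : 0 ≤ M) (hd0 : ∀ k, 0 ≤ d k) (hd : Summable d)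
    (hb : ∀ s : Finset ℕ, ‖∑ k ∈ s, x k‖ ^ 2 ≤ M * ∑ k ∈ s, d k) : Summable x := by
  rw [summable_iff_vanishing_norm]
  intro ε hε
  have hδ : 0 < ε ^ 2 / (M + 1) := by positivity
  obtain ⟨s, hs⟩ := summable_iff_vanishing_norm.1 hd (ε ^ 2 / (M + 1)) hδ
  refine ⟨s, fun t ht => ?_⟩
  have h1 : ‖∑ k ∈ t, x k‖ ^ 2 ≤ M * ∑ k ∈ t, d k := hb t
  have h2 : ∑ k ∈ t, d k < ε ^ 2 / (M + 1) := by
    have := hs t ht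
    calc ∑ k ∈ t, d k ≤ ‖∑ k ∈ t, d k‖ := le_abs_self _
      _ < _ := this
  have h3 : 0 ≤ ∑ k ∈ t, d k := Finset.sum_nonneg fun k _ => hd0 k
  have h4 : M * ∑ k ∈ t, d k < ε ^ 2 := by
    have : (M + 1) * (ε ^ 2 / (M + 1)) = ε ^ 2 := by field_simp
    nlinarith
  nlinarith [norm_nonneg (∑ k ∈ t, x k)]

private lemma aux_hasSum_normsq {E : Type*} [NormedAddCommGroup E]
    {x : ℕ → E} {d : ℕ → ℝ} {y : E} (hx : HasSum x y)
    (hb : ∀ s : Finset ℕ, ‖∑ k ∈ s, x k‖ ^ 2 = ∑ k ∈ s, d k) : HasSum d (‖y‖ ^ 2) := by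
  have hcont : Continuous fun z : E => ‖z‖ ^ 2 := by fun_prop
  have h := (hcont.tendsto y).comp hx
  have heq : (fun s : Finset ℕ => ‖∑ k ∈ s, x k‖ ^ 2) = fun s => ∑ k ∈ s, d k :=
    funext hb
  unfold HasSum
  rw [← heq]
  exact h

set_option maxHeartbeats 1000000 in
/-- If there exist an infinite-dimensional subspace `D ⊆ H` and `A > 0` with
`A‖f‖² ≤ ∑ |⟨f, f_n⟩|² < ∞` for all `f ∈ D`, then `{f_n}` is a CFC sequence: there is a
bounded operator `B` on `H` such that `{B f_n}` is a Parseval frame for `H`. -/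
theorem stmt2 {H : Type*} [NormedAddCommGroup H] [InnerProductSpace ℂ H]
    [CompleteSpace H] [TopologicalSpace.SeparableSpace H]
    (hH : ¬ FiniteDimensional ℂ H) (fseq : ℕ → H)
    (hD : ∃ D : Submodule ℂ H, ¬ FiniteDimensional ℂ D ∧
      ∃ A : ℝ, 0 < A ∧ ∀ f ∈ D,
        Summable (fun n => ‖⟪f, fseq n⟫‖ ^ 2) ∧
        A * ‖f‖ ^ 2 ≤ ∑' n, ‖⟪f, fseq n⟫‖ ^ 2) :
    ∃ B : H →L[ℂ] H, ∀ f : H, HasSum (fun n => ‖⟪f, B (fseq n)⟫‖ ^ 2) (‖f‖ ^ 2) := by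
  classical
  obtain ⟨D, hDinf, A, hA, hDb⟩ := hD
  haveI : Fact ((1:ℝ≥0∞) ≤ 2) := ⟨one_le_two⟩
  have h2t : ((2:ℝ≥0∞)).toReal = (2:ℝ) := by norm_num
  have hrpow : ∀ a : ℝ, a ^ ((2:ℝ≥0∞)).toReal = a ^ (2:ℕ) := by
    intro a
    rw [h2t, show (2:ℝ) = ((2:ℕ):ℝ) by norm_num, Real.rpow_natCast]
  -- the analysis operator on D
  have key : ∀ x : H, x ∈ D → Memℓp (fun n => ⟪fseq n, x⟫) 2 := by
    intro x hx
    apply memℓp_gen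
    have h := (hDb x hx).1
    have heq : (fun n => ‖⟪fseq n, x⟫‖ ^ ((2:ℝ≥0∞)).toReal) = fun n => ‖⟪x, fseq n⟫‖ ^ (2:ℕ) := by
      funext n
      rw [hrpow, norm_inner_symm]
    rw [heq]
    exact_mod_cast h
  let T : D →ₗ[ℂ] lp (fun _ : ℕ => ℂ) 2 :=
    { toFun := fun x => ⟨fun n => ⟪fseq n, (x:H)⟫, key x x.2⟩
      map_add' := fun x y => lp.ext (by
        rw [lp.coeFn_add]
        funext n
        simp [inner_add_right])
      map_smul' := fun c x => lp.ext (by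
        rw [lp.coeFn_smul]
        funext n
        simp [inner_smul_right]) }
  have hTapp : ∀ (x : D) (n : ℕ), (T x : ∀ _ : ℕ, ℂ) n = ⟪fseq n, (x:H)⟫ := fun x n => rfl
  have hTnorm : ∀ x : D, ‖T x‖ ^ 2 = ∑' n, ‖⟪((x:H)), fseq n⟫‖ ^ 2 := by
    intro x
    have h := lp.norm_rpow_eq_tsum (p := 2) (by norm_num) (T x)
    rw [hrpow] at h
    rw [h]
    congr 1
    funext n
    rw [hrpow, hTapp, norm_inner_symm]
  have hTlow : ∀ x : D, A * ‖(x:H)‖ ^ 2 ≤ ‖T x‖ ^ 2 := by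
    intro x
    rw [hTnorm]
    exact (hDb x x.2).2
  have hTinj : Function.Injective T := by
    refine LinearMap.ker_eq_bot.1 ((Submodule.eq_bot_iff _).2 fun x hx => ?_)
    have h0 : ‖T x‖ ^ 2 = 0 := by rw [LinearMap.mem_ker.1 hx, norm_zero]; ring
    have h1 := hTlow x
    rw [h0] at h1
    have h2 : ‖(x:H)‖ ^ 2 ≤ 0 := by nlinarith [sq_nonneg ‖(x:H)‖]
    have h3 : ‖(x:H)‖ = 0 := by nlinarith [norm_nonneg (x:H), sq_nonneg ‖(x:H)‖]
    exact Subtype.ext (norm_eq_zero.1 h3)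
  have hRinf : ¬ FiniteDimensional ℂ (LinearMap.range T) := by
    intro hfin
    exact hDinf ((LinearEquiv.ofInjective T hTinj).symm.finiteDimensional)
  -- a linearly independent sequence in range T
  set R := LinearMap.range T with hR
  let bR := Module.Basis.ofVectorSpace ℂ R
  haveI : Infinite (Module.Basis.ofVectorSpaceIndex ℂ R) := by
    rw [← not_finite_iff_infinite]
    intro hfin
    exact hRinf (Module.Finite.of_basis bR)
  let emb := Infinite.natEmbedding (Module.Basis.ofVectorSpaceIndex ℂ R)
  let g : ℕ → lp (fun _ : ℕ => ℂ) 2 := fun k => ((bR (emb k)) : lp (fun _ : ℕ => ℂ) 2)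
  have hgmem : ∀ k, g k ∈ R := fun k => (bR (emb k)).2
  have hgind : LinearIndependent ℂ g :=
    (bR.linearIndependent.comp emb emb.injective).map' R.subtype (Submodule.ker_subtype _)
  -- Gram-Schmidt
  let v : ℕ → lp (fun _ : ℕ => ℂ) 2 := InnerProductSpace.gramSchmidtNormed ℂ g
  have hvon : Orthonormal ℂ v := InnerProductSpace.gramSchmidtNormed_orthonormal hgind
  have hspan : Submodule.span ℂ (Set.range g) ≤ R :=
    Submodule.span_le.2 (Set.range_subset_iff.2 hgmem)
  have hvmem : ∀ k, v k ∈ R := by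
    intro k
    show InnerProductSpace.gramSchmidtNormed ℂ g k ∈ R
    rw [InnerProductSpace.gramSchmidtNormed]
    exact Submodule.smul_mem _ _
      (hspan (Submodule.span_mono (Set.image_subset_range g _)
        (InnerProductSpace.gramSchmidt_mem_span ℂ g (le_refl k))))
  choose u hu using fun k => LinearMap.mem_range.1 (hvmem k)
  -- a Hilbert basis of H, countable and infinite
  obtain ⟨w, b, hbcoe⟩ := exists_hilbertBasis ℂ H
  have horth : Orthonormal ℂ ⇑b := b.orthonormal
  have hdist : ∀ i j : w, i ≠ j → (1:ℝ) ≤ dist (b i) (b j) := by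
    intro i j hij
    have hz : (⟪b i, b j⟫ : ℂ) = 0 := horth.2 hij
    have h1 : ‖b i - b j‖ ^ 2 = 2 := by
      rw [@norm_sub_sq ℂ, horth.1 i, horth.1 j, hz]
      norm_num
    rw [dist_eq_norm]
    nlinarith [norm_nonneg (b i - b j)]
  haveI hwc : Countable w := by
    apply Pairwise.countable_of_isOpen_disjoint
      (s := fun i : w => Metric.ball (b i) (1/2))
    · intro i j hij
      exact Metric.ball_disjoint_ball (le_trans (by norm_num) (hdist i j hij))
    · intro i; exact Metric.isOpen_ball
    · intro i; exact Metric.nonempty_ball.2 (by norm_num)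
  haveI hwinf : Infinite w := by
    rw [← not_finite_iff_infinite]
    intro hfin
    apply hH
    have hspan' := b.dense_span
    have hfd : FiniteDimensional ℂ (Submodule.span ℂ (Set.range ⇑b)) :=
      FiniteDimensional.span_of_finite ℂ (Set.finite_range ⇑b)
    have hclosed : IsClosed (Submodule.span ℂ (Set.range ⇑b) : Set H) :=
      Submodule.closed_of_finiteDimensional _
    have htop : Submodule.span ℂ (Set.range ⇑b) = ⊤ := by
      rw [← hclosed.submodule_topologicalClosure_eq]
      exact hspan'
    rw [htop] at hfd
    exact (Submodule.topEquiv (R := ℂ) (M := H)).finiteDimensional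
  have e : ℕ ≃ w := Classical.choice nonempty_equiv_of_countable
  -- Parseval identity for the basis
  have hPars : ∀ f : H, HasSum (fun k : ℕ => ‖⟪(b (e k) : H), f⟫‖ ^ 2) (‖f‖ ^ 2) := by
    intro f
    have h1 := lp.hasSum_norm (p := 2) (by norm_num) (b.repr f)
    simp only [hrpow] at h1
    have h2 : ‖b.repr f‖ = ‖f‖ := b.repr.norm_map f
    rw [h2] at h1
    have h3 : ∀ i : w, ‖b.repr f i‖ ^ (2:ℕ) = ‖⟪(b i : H), f⟫‖ ^ 2 := by
      intro i
      rw [b.repr_apply_apply]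
    simp only [h3] at h1
    exact (Equiv.hasSum_iff e).2 h1
  -- equality of squared norms of finite combinations of v
  have hvnorm : ∀ (c : ℕ → ℂ) (s : Finset ℕ),
      ‖∑ k ∈ s, c k • v k‖ ^ 2 = ∑ k ∈ s, ‖c k‖ ^ 2 := by
    intro c s
    have hinner : ⟪∑ k ∈ s, c k • v k, ∑ k ∈ s, c k • v k⟫ =
        ∑ k ∈ s, ((‖c k‖ : ℂ)) ^ 2 := by
      rw [hvon.inner_sum]
      exact Finset.sum_congr rfl fun k _ => RCLike.conj_mul _
    have h2 := inner_self_eq_norm_sq (𝕜 := ℂ) (∑ k ∈ s, c k • v k)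
    rw [hinner] at h2
    rw [← h2]
    simp [map_sum, ← Complex.ofReal_pow]
  -- finite estimate in H
  have hfin : ∀ (c : ℕ → ℂ) (s : Finset ℕ),
      ‖∑ k ∈ s, c k • ((u k : D) : H)‖ ^ 2 ≤ A⁻¹ * ∑ k ∈ s, ‖c k‖ ^ 2 := by
    intro c s
    set x : D := ∑ k ∈ s, c k • u k with hx
    have hxH : ((x : D) : H) = ∑ k ∈ s, c k • ((u k : D) : H) := by
      rw [hx]; push_cast; rfl
    have hTx : T x = ∑ k ∈ s, c k • v k := by
      rw [hx, map_sum]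
      exact Finset.sum_congr rfl fun k _ => by rw [map_smul, hu k]
    have h1 : A * ‖((x:D):H)‖ ^ 2 ≤ ∑ k ∈ s, ‖c k‖ ^ 2 := by
      have := hTlow x
      rw [hTx, hvnorm] at this
      exact this
    rw [← hxH]
    have h2 := mul_le_mul_of_nonneg_left h1 (le_of_lt (inv_pos.2 hA))
    rw [← mul_assoc, inv_mul_cancel₀ hA.ne', one_mul] at h2
    exact h2
  -- summability of the H-valued series
  have hsumH : ∀ f : H, Summable (fun k => (⟪(b (e k) : H), f⟫ : ℂ) • ((u k : D) : H)) := by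
    intro f
    exact aux_summable (by positivity) (fun k => sq_nonneg _) (hPars f).summable
      (fun s => hfin _ s)
  -- the bounded operator C
  let Clin : H →ₗ[ℂ] H :=
    { toFun := fun f => ∑' k, (⟪(b (e k) : H), f⟫ : ℂ) • ((u k : D) : H)
      map_add' := fun f h => by
        have heq : (fun k => (⟪(b (e k) : H), f + h⟫ : ℂ) • ((u k : D) : H)) =
            fun k => (⟪(b (e k) : H), f⟫ : ℂ) • ((u k : D) : H) +
              (⟪(b (e k) : H), h⟫ : ℂ) • ((u k : D) : H) := by
          funext k; rw [inner_add_right, add_smul]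
        rw [heq, Summable.tsum_add (hsumH f) (hsumH h)]
      map_smul' := fun a f => by
        have heq : (fun k => (⟪(b (e k) : H), a • f⟫ : ℂ) • ((u k : D) : H)) =
            fun k => a • ((⟪(b (e k) : H), f⟫ : ℂ) • ((u k : D) : H)) := by
          funext k; rw [inner_smul_right, smul_smul]
        rw [heq, Summable.tsum_const_smul a (hsumH f)]
        rfl }
  have hCb : ∀ f : H, ‖Clin f‖ ≤ Real.sqrt A⁻¹ * ‖f‖ := by
    intro f
    have hsq : ‖Clin f‖ ^ 2 ≤ A⁻¹ * ‖f‖ ^ 2 := by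
      have hs := (hsumH f).hasSum
      have hcont : Continuous fun z : H => ‖z‖ ^ 2 := by fun_prop
      have htend := (hcont.tendsto _).comp hs
      refine le_of_tendsto htend ?_
      filter_upwards with s
      calc ‖∑ k ∈ s, (⟪(b (e k) : H), f⟫ : ℂ) • ((u k : D) : H)‖ ^ 2
          ≤ A⁻¹ * ∑ k ∈ s, ‖(⟪(b (e k) : H), f⟫ : ℂ)‖ ^ 2 := hfin _ s
        _ ≤ A⁻¹ * ‖f‖ ^ 2 := by
            apply mul_le_mul_of_nonneg_left _ (le_of_lt (inv_pos.2 hA))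
            rw [← (hPars f).tsum_eq]
            exact Summable.sum_le_tsum s (fun k _ => sq_nonneg _) (hPars f).summable
    have h1 : ‖Clin f‖ = Real.sqrt (‖Clin f‖ ^ 2) := by
      rw [Real.sqrt_sq (norm_nonneg _)]
    rw [h1]
    calc Real.sqrt (‖Clin f‖ ^ 2) ≤ Real.sqrt (A⁻¹ * ‖f‖ ^ 2) := Real.sqrt_le_sqrt hsq
      _ = Real.sqrt A⁻¹ * ‖f‖ := by
          rw [Real.sqrt_mul (by positivity), Real.sqrt_sq (norm_nonneg _)]
  let C : H →L[ℂ] H := Clin.mkContinuous (Real.sqrt A⁻¹) hCb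
  have hCapp : ∀ f : H, C f = ∑' k, (⟪(b (e k) : H), f⟫ : ℂ) • ((u k : D) : H) := fun f => rfl
  refine ⟨ContinuousLinearMap.adjoint C, fun f => ?_⟩
  -- reduce the inner products
  have hred : ∀ n, ‖⟪f, (ContinuousLinearMap.adjoint C) (fseq n)⟫‖ = ‖⟪fseq n, C f⟫‖ := by
    intro n
    rw [ContinuousLinearMap.adjoint_inner_right, norm_inner_symm]
  -- the ℓ² element y
  have hsumv : Summable (fun k => (⟪(b (e k) : H), f⟫ : ℂ) • v k) := by
    refine aux_summable (M := 1) zero_le_one (fun k => sq_nonneg _) (hPars f).summable ?_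
    intro s
    rw [hvnorm, one_mul]
  set y : lp (fun _ : ℕ => ℂ) 2 := ∑' k, (⟪(b (e k) : H), f⟫ : ℂ) • v k with hy
  have hyS : HasSum (fun k => (⟪(b (e k) : H), f⟫ : ℂ) • v k) y := hsumv.hasSum
  have hynorm : HasSum (fun k => ‖(⟪(b (e k) : H), f⟫ : ℂ)‖ ^ 2) (‖y‖ ^ 2) :=
    aux_hasSum_normsq hyS (fun s => hvnorm _ s)
  have hyf : ‖y‖ ^ 2 = ‖f‖ ^ 2 := hynorm.unique (hPars f)
  -- coordinates of y
  have hcoord : ∀ n : ℕ, (y : ∀ _ : ℕ, ℂ) n = ⟪fseq n, C f⟫ := by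
    intro n
    let φlin : lp (fun _ : ℕ => ℂ) 2 →ₗ[ℂ] ℂ :=
      { toFun := fun x => (x : ∀ _ : ℕ, ℂ) n
        map_add' := fun x z => by dsimp only; rw [lp.coeFn_add]; rfl
        map_smul' := fun a x => by dsimp only; rw [lp.coeFn_smul]; rfl }
    let φ : lp (fun _ : ℕ => ℂ) 2 →L[ℂ] ℂ := φlin.mkContinuous 1
      (fun x => by simpa [φlin] using lp.norm_apply_le_norm (by norm_num) x n)
    have h1 : HasSum (fun k => φ ((⟪(b (e k) : H), f⟫ : ℂ) • v k)) (φ y) := hyS.mapL φ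
    have h2 : HasSum (fun k => (⟪fseq n, ((⟪(b (e k) : H), f⟫ : ℂ) • ((u k : D) : H))⟫ : ℂ))
        ⟪fseq n, C f⟫ := by
      have := ((hsumH f).hasSum).mapL (innerSL ℂ (fseq n))
      rw [← hCapp] at this
      exact this
    have heq : (fun k => φ ((⟪(b (e k) : H), f⟫ : ℂ) • v k)) =
        fun k => (⟪fseq n, ((⟪(b (e k) : H), f⟫ : ℂ) • ((u k : D) : H))⟫ : ℂ) := by
      funext k
      have hφ : φ ((⟪(b (e k) : H), f⟫ : ℂ) • v k) =
          (⟪(b (e k) : H), f⟫ : ℂ) * (v k : ∀ _ : ℕ, ℂ) n := by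
        show ((((⟪(b (e k) : H), f⟫ : ℂ) • v k) : lp (fun _ : ℕ => ℂ) 2) : ∀ _ : ℕ, ℂ) n = _
        rw [lp.coeFn_smul]
        rfl
      rw [hφ, inner_smul_right]
      congr 1
      rw [← hu k]
      rfl
    rw [heq] at h1
    exact h1.unique h2
  -- conclude
  have hfinal : HasSum (fun n => ‖(y : ∀ _ : ℕ, ℂ) n‖ ^ 2) (‖f‖ ^ 2) := by
    have h1 := lp.hasSum_norm (p := 2) (by norm_num) y
    simp only [hrpow] at h1
    rw [hyf] at h1
    exact h1
  simp only [hred]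
  simp only [← hcoord]
  exact hfinal
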